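/- (Elsner's reduction lemma.) Let d ≥ 1 and let {S_i}_{i∈I} be a bounded family of matrices in Matrix d d ℂ (indexed by a nonempty set I) with joint spectral radius ρ̂(S) = 1, and suppose the multiplicative semigroup of all finite products S_{i_n}···S_{i_1} (n ≥ 1, i_1,…,i_n ∈ I) is unbounded in norm. Then there exist an invertible matrix P ∈ Matrix d d ℂ and an integer d₁ with 1 ≤ d₁ < d such that for every i ∈ I the matrix P⁻¹ S_i P is block upper triangular with respect to the decomposition d = (d − d₁) + d₁: its lower-left d₁ × (d − d₁) block is zero, i.e. (P⁻¹ S_i P)_{jk} = 0 whenever j > d − d₁ and k ≤ d − d₁. -/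

import Mathlib

open Filter Topology MeasureTheory

/-- Operator norm on `d × d` complex matrices induced by the Euclidean norm on `ℂ^d`. -/
noncomputable def opNorm {d : ℕ} (A : Matrix (Fin d) (Fin d) ℂ) : ℝ :=
  ‖Matrix.toEuclideanCLM (𝕜 := ℂ) A‖

/-- `prodS S x n = S_{i_n} ⋯ S_{i_1}` where `i_k = x (k-1)`. -/
noncomputable def prodS {d : ℕ} {I : Type*} (S : I → Matrix (Fin d) (Fin d) ℂ)
    (x : ℕ → I) : ℕ → Matrix (Fin d) (Fin d) ℂ
  | 0 => 1
  | n + 1 => S (x n) * prodS S x n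

/-! ### Auxiliary lemmas -/

lemma opNorm_nonneg' {d : ℕ} (A : Matrix (Fin d) (Fin d) ℂ) : 0 ≤ opNorm A := norm_nonneg _

lemma opNorm_mul_le' {d : ℕ} (A B : Matrix (Fin d) (Fin d) ℂ) :
    opNorm (A * B) ≤ opNorm A * opNorm B := by
  unfold opNorm
  rw [map_mul]
  exact norm_mul_le _ _

lemma opNorm_one' {d : ℕ} (hd : 1 ≤ d) : opNorm (1 : Matrix (Fin d) (Fin d) ℂ) = 1 := by
  unfold opNorm
  rw [map_one]
  have : Nontrivial (EuclideanSpace ℂ (Fin d)) := by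
    have : Nonempty (Fin d) := ⟨⟨0, hd⟩⟩
    infer_instance
  exact norm_one

lemma prodS_congr {d : ℕ} {I : Type*} (S : I → Matrix (Fin d) (Fin d) ℂ)
    {x y : ℕ → I} {n : ℕ} (h : ∀ k < n, x k = y k) : prodS S x n = prodS S y n := by
  induction n with
  | zero => rfl
  | succ n ih =>
    rw [prodS, prodS, h n (Nat.lt_succ_self n), ih fun k hk => h k (hk.trans (Nat.lt_succ_self n))]

lemma prodS_add {d : ℕ} {I : Type*} (S : I → Matrix (Fin d) (Fin d) ℂ)
    (x : ℕ → I) (a b : ℕ) :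
    prodS S x (a + b) = prodS S (fun k => x (k + a)) b * prodS S x a := by
  induction b with
  | zero => simp [prodS]
  | succ b ih => rw [← Nat.add_assoc, prodS, prodS, ih, Nat.add_comm b a, mul_assoc]

/-- Euclidean norm of a vector of `Fin d → ℂ`. -/
noncomputable def evNorm {d : ℕ} (v : Fin d → ℂ) : ℝ :=
  ‖(WithLp.equiv 2 (Fin d → ℂ)).symm v‖

lemma norm_clm_apply_eq_evNorm {d : ℕ} (A : Matrix (Fin d) (Fin d) ℂ)
    (u : EuclideanSpace ℂ (Fin d)) :
    ‖Matrix.toEuclideanCLM (𝕜 := ℂ) A u‖ = evNorm (A.mulVec (WithLp.equiv 2 (Fin d → ℂ) u)) := by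
  have h : Matrix.toEuclideanCLM (𝕜 := ℂ) A ((WithLp.equiv 2 (Fin d → ℂ)).symm (WithLp.equiv 2 (Fin d → ℂ) u))
      = (WithLp.equiv 2 (Fin d → ℂ)).symm (Matrix.toLin' A (WithLp.equiv 2 (Fin d → ℂ) u)) := rfl
  rw [Equiv.symm_apply_apply] at h
  rw [h, Matrix.toLin'_apply]
  rfl

lemma coord_le_evNorm {d : ℕ} (v : Fin d → ℂ) (j : Fin d) : ‖v j‖ ≤ evNorm v := by
  have h : evNorm v = Real.sqrt (∑ i, ‖v i‖ ^ 2) := by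
    have := EuclideanSpace.norm_eq ((WithLp.equiv 2 (Fin d → ℂ)).symm v)
    simpa [evNorm] using this
  rw [h, ← Real.sqrt_sq (norm_nonneg (v j))]
  exact Real.sqrt_le_sqrt (Finset.single_le_sum (fun i _ => sq_nonneg ‖v i‖) (Finset.mem_univ j))

lemma evNorm_add_le {d : ℕ} (v w : Fin d → ℂ) : evNorm (v + w) ≤ evNorm v + evNorm w := by
  unfold evNorm
  rw [show (WithLp.equiv 2 (Fin d → ℂ)).symm (v + w)
      = (WithLp.equiv 2 (Fin d → ℂ)).symm v + (WithLp.equiv 2 (Fin d → ℂ)).symm w from rfl]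
  exact norm_add_le _ _

lemma evNorm_smul {d : ℕ} (c : ℂ) (v : Fin d → ℂ) : evNorm (c • v) = ‖c‖ * evNorm v := by
  unfold evNorm
  rw [show (WithLp.equiv 2 (Fin d → ℂ)).symm (c • v)
      = c • (WithLp.equiv 2 (Fin d → ℂ)).symm v from rfl]
  exact norm_smul _ _

lemma evNorm_zero {d : ℕ} : evNorm (0 : Fin d → ℂ) = 0 := norm_zero

lemma evNorm_nonneg {d : ℕ} (v : Fin d → ℂ) : 0 ≤ evNorm v := norm_nonneg _

lemma evNorm_sum_le {d : ℕ} {α : Type*} (s : Finset α) (f : α → (Fin d → ℂ)) :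
    evNorm (∑ j ∈ s, f j) ≤ ∑ j ∈ s, evNorm (f j) := by
  classical
  induction s using Finset.cons_induction with
  | empty => simp [evNorm_zero]
  | cons a s ha ih =>
    rw [Finset.sum_cons, Finset.sum_cons]
    exact (evNorm_add_le _ _).trans (by linarith)

/-! ### Linear algebra: conjugation into block-triangular form -/

lemma conj_entry_eq_repr {d : ℕ} (b : Module.Basis (Fin d) ℂ (Fin d → ℂ))
    (A : Matrix (Fin d) (Fin d) ℂ) (j k : Fin d) :
    (((Pi.basisFun ℂ (Fin d)).toMatrix ⇑b)⁻¹ * A * (Pi.basisFun ℂ (Fin d)).toMatrix ⇑b) j k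
      = b.repr (A.mulVec (b k)) j := by
  let pb := Pi.basisFun ℂ (Fin d)
  have hinv : (pb.toMatrix ⇑b)⁻¹ = b.toMatrix ⇑pb :=
    Matrix.inv_eq_right_inv (Module.Basis.toMatrix_mul_toMatrix_flip _ _)
  show ((pb.toMatrix ⇑b)⁻¹ * A * pb.toMatrix ⇑b) j k = _
  rw [hinv]
  have key : b.toMatrix ⇑pb * A * pb.toMatrix ⇑b
      = LinearMap.toMatrix b b (Matrix.toLin' A) := by
    have h1 := basis_toMatrix_mul b pb pb A
    rw [Matrix.toLin_eq_toLin'] at h1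
    rw [h1, linearMap_toMatrix_mul_basis_toMatrix]
  rw [key, LinearMap.toMatrix_apply, Matrix.toLin'_apply]

lemma isUnit_pb_toMatrix {d : ℕ} (b : Module.Basis (Fin d) ℂ (Fin d → ℂ)) :
    IsUnit ((Pi.basisFun ℂ (Fin d)).toMatrix ⇑b) := by
  classical
  have := (Pi.basisFun ℂ (Fin d)).invertibleToMatrix b
  exact isUnit_of_invertible _

lemma invariant_block_triangular {d : ℕ} {I : Type*}
    (S : I → Matrix (Fin d) (Fin d) ℂ) (V : Submodule ℂ (Fin d → ℂ))
    (hV : ∀ i, ∀ v ∈ V, (S i).mulVec v ∈ V) :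
    ∃ P : Matrix (Fin d) (Fin d) ℂ, IsUnit P ∧
      ∀ (i : I) (j k : Fin d), Module.finrank ℂ V ≤ (j : ℕ) → (k : ℕ) < Module.finrank ℂ V →
        (P⁻¹ * S i * P) j k = 0 := by
  classical
  set r := Module.finrank ℂ V with hr
  obtain ⟨W, hW⟩ := Submodule.exists_isCompl V
  have hadd : r + Module.finrank ℂ W = d := by
    rw [hr, Submodule.finrank_add_eq_of_isCompl hW, Module.finrank_pi, Fintype.card_fin]
  let cV : Module.Basis (Fin r) ℂ V := Module.finBasis ℂ V
  let cW : Module.Basis (Fin (Module.finrank ℂ W)) ℂ W := Module.finBasis ℂ W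
  let eqv := Submodule.prodEquivOfIsCompl V W hW
  let b0 : Module.Basis (Fin r ⊕ Fin (Module.finrank ℂ W)) ℂ (Fin d → ℂ) := (cV.prod cW).map eqv
  let e : (Fin r ⊕ Fin (Module.finrank ℂ W)) ≃ Fin d := finSumFinEquiv.trans (finCongr hadd)
  let b : Module.Basis (Fin d) ℂ (Fin d → ℂ) := b0.reindex e
  have hval : ∀ i : Fin r, ((e (Sum.inl i) : Fin d) : ℕ) = (i : ℕ) := by
    intro i; simp [e]
  have hrepr : ∀ v ∈ V, ∀ j : Fin d, r ≤ (j : ℕ) → b.repr v j = 0 := by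
    intro v hv j hj
    rw [Module.Basis.repr_reindex_apply]
    rcases h : e.symm j with i | i
    · exfalso
      have : j = e (Sum.inl i) := by
        rw [← h, Equiv.apply_symm_apply]
      rw [this, hval i] at hj
      exact absurd hj (not_le.mpr i.isLt)
    · rw [Module.Basis.map_repr]
      simp only [LinearEquiv.trans_apply]
      have h2 : (eqv.symm v).2 = 0 :=
        (Submodule.prodEquivOfIsCompl_symm_apply_snd_eq_zero V W hW).mpr hv
      have : (cV.prod cW).repr (eqv.symm v) (Sum.inr i) = cW.repr (eqv.symm v).2 i :=
        Module.Basis.prod_repr_inr _ _ _ _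
      rw [this, h2, map_zero, Finsupp.zero_apply]
  have hmem : ∀ k : Fin d, (k : ℕ) < r → b k ∈ V := by
    intro k hk
    have : e.symm k = Sum.inl ⟨(k : ℕ), hk⟩ := by
      rw [Equiv.symm_apply_eq]
      apply Fin.ext
      rw [hval]
    rw [Module.Basis.reindex_apply, this, Module.Basis.map_apply]
    have h1 : ((cV.prod cW) (Sum.inl ⟨(k : ℕ), hk⟩)).1 = cV ⟨(k : ℕ), hk⟩ :=
      Module.Basis.prod_apply_inl_fst _ _ _
    have h2 : ((cV.prod cW) (Sum.inl ⟨(k : ℕ), hk⟩)).2 = 0 :=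
      Module.Basis.prod_apply_inl_snd _ _ _
    rw [Submodule.coe_prodEquivOfIsCompl', h1, h2]
    simp
  refine ⟨(Pi.basisFun ℂ (Fin d)).toMatrix ⇑b, isUnit_pb_toMatrix b, ?_⟩
  intro i j k hj hk
  rw [conj_entry_eq_repr]
  exact hrepr _ (hV i _ (hmem k hk)) j hj

/-- **Elsner's reduction lemma.** If a bounded family of matrices has joint spectral
radius `1` but its multiplicative semigroup of products is unbounded, then the family is
simultaneously similar to a common block upper-triangular form, with nontrivial diagonal
blocks of sizes `d - d₁` and `d₁`.  (Products of length `n` over words in `I^n` are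
expressed as `prodS S x n` over signals `x : ℕ → I`.) -/
theorem elsner_reduction {d : ℕ} (hd : 1 ≤ d) {I : Type*} [Nonempty I]
    (S : I → Matrix (Fin d) (Fin d) ℂ)
    (hbdd : ∃ C : ℝ, ∀ i : I, opNorm (S i) ≤ C)
    (hjsr : Filter.limsup
        (fun n : ℕ => ⨆ x : ℕ → I, opNorm (prodS S x n) ^ (1 / (n : ℝ)))
        Filter.atTop = 1)
    (hunbd : ¬ ∃ B : ℝ, ∀ n : ℕ, 1 ≤ n → ∀ x : ℕ → I, opNorm (prodS S x n) ≤ B) :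
    ∃ P : Matrix (Fin d) (Fin d) ℂ, IsUnit P ∧
      ∃ d₁ : ℕ, 1 ≤ d₁ ∧ d₁ < d ∧
        ∀ (i : I) (j k : Fin d), d - d₁ ≤ (j : ℕ) → (k : ℕ) < d - d₁ →
          (P⁻¹ * S i * P) j k = 0 := by
  obtain ⟨C0, hC0⟩ := hbdd
  set C : ℝ := max C0 1 with hCdef
  have hC1 : (1 : ℝ) ≤ C := le_max_right _ _
  have hCpos : (0 : ℝ) ≤ C := zero_le_one.trans hC1
  have hSle : ∀ i, opNorm (S i) ≤ C := fun i => (hC0 i).trans (le_max_left _ _)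
  have hprod_le : ∀ (x : ℕ → I) (n : ℕ), opNorm (prodS S x n) ≤ C ^ n := by
    intro x n
    induction n with
    | zero => rw [pow_zero]; exact le_of_eq (opNorm_one' hd)
    | succ n ih =>
      calc opNorm (prodS S x (n + 1)) = opNorm (S (x n) * prodS S x n) := rfl
        _ ≤ opNorm (S (x n)) * opNorm (prodS S x n) := opNorm_mul_le' _ _
        _ ≤ C * C ^ n := mul_le_mul (hSle _) ih (opNorm_nonneg' _) hCpos
        _ = C ^ (n + 1) := by ring
  -- each element of the sup family is bounded by C
  have helem : ∀ (n : ℕ) (x : ℕ → I), opNorm (prodS S x n) ^ (1 / (n : ℝ)) ≤ C := by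
    intro n x
    rcases Nat.eq_zero_or_pos n with hn | hn
    · subst hn
      norm_num
      exact hC1
    · have h1 : opNorm (prodS S x n) ^ (1 / (n : ℝ)) ≤ (C ^ n) ^ (1 / (n : ℝ)) :=
        Real.rpow_le_rpow (opNorm_nonneg' _) (hprod_le x n)
          (by positivity)
      have h2 : ((C : ℝ) ^ n) ^ (1 / (n : ℝ)) = C := by
        rw [← Real.rpow_natCast C n, ← Real.rpow_mul hCpos, mul_one_div,
          div_self (by exact_mod_cast hn.ne' : (n : ℝ) ≠ 0), Real.rpow_one]
      rw [h2] at h1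
      exact h1
  have hbddrange : ∀ n : ℕ,
      BddAbove (Set.range fun x : ℕ → I => opNorm (prodS S x n) ^ (1 / (n : ℝ))) := by
    intro n
    exact ⟨C, by rintro y ⟨x, rfl⟩; exact helem n x⟩
  -- the subspace of vectors with bounded orbit
  let V : Submodule ℂ (Fin d → ℂ) :=
    { carrier := {v | ∃ B : ℝ, ∀ (n : ℕ) (x : ℕ → I), evNorm ((prodS S x n).mulVec v) ≤ B}
      add_mem' := by
        rintro a b ⟨Ba, hBa⟩ ⟨Bb, hBb⟩
        refine ⟨Ba + Bb, fun n x => ?_⟩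
        rw [Matrix.mulVec_add]
        exact (evNorm_add_le _ _).trans (add_le_add (hBa n x) (hBb n x))
      zero_mem' := ⟨0, fun n x => by rw [Matrix.mulVec_zero]; exact le_of_eq evNorm_zero⟩
      smul_mem' := by
        rintro c a ⟨Ba, hBa⟩
        refine ⟨‖c‖ * max Ba 0, fun n x => ?_⟩
        rw [Matrix.mulVec_smul, evNorm_smul]
        exact mul_le_mul_of_nonneg_left ((hBa n x).trans (le_max_left _ _)) (norm_nonneg c) }
  have hmemV : ∀ v : Fin d → ℂ,
      v ∈ V ↔ ∃ B : ℝ, ∀ (n : ℕ) (x : ℕ → I), evNorm ((prodS S x n).mulVec v) ≤ B :=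
    fun v => Iff.rfl
  -- invariance
  have hVinv : ∀ i, ∀ v ∈ V, (S i).mulVec v ∈ V := by
    intro i v hv
    obtain ⟨B, hB⟩ := hv
    refine ⟨B, fun n x => ?_⟩
    set x' : ℕ → I := fun k => if k = 0 then i else x (k - 1) with hx'
    have hsplit : prodS S x' (1 + n) = prodS S x n * prodS S x' 1 := by
      rw [prodS_add S x' 1 n]
      congr 1
    have h1 : prodS S x' 1 = S i * 1 := by
      show S (x' 0) * prodS S x' 0 = S i * 1
      simp [hx', prodS]
    have : (prodS S x n).mulVec ((S i).mulVec v) = (prodS S x' (1 + n)).mulVec v := by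
      rw [hsplit, h1, mul_one, Matrix.mulVec_mulVec]
    rw [this]
    exact hB (1 + n) x'
  -- V is not everything
  have hVne_top : V ≠ ⊤ := by
    intro htop
    apply hunbd
    have hBj : ∀ j : Fin d, ∃ B : ℝ, ∀ (n : ℕ) (x : ℕ → I),
        evNorm ((prodS S x n).mulVec (Pi.single j 1)) ≤ B := by
      intro j
      have : (Pi.single j (1:ℂ) : Fin d → ℂ) ∈ V := htop ▸ Submodule.mem_top
      exact this
    choose Bf hBf using hBj
    set D : ℝ := ∑ j : Fin d, max (Bf j) 0 with hD
    have hDnn : 0 ≤ D := Finset.sum_nonneg fun j _ => le_max_right _ _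
    refine ⟨D, fun n _ x => ?_⟩
    show ‖Matrix.toEuclideanCLM (𝕜 := ℂ) (prodS S x n)‖ ≤ D
    apply ContinuousLinearMap.opNorm_le_bound _ hDnn
    intro u
    set A := prodS S x n with hA
    set uv : Fin d → ℂ := WithLp.equiv 2 (Fin d → ℂ) u with huv
    have huvnorm : ∀ j, ‖uv j‖ ≤ ‖u‖ := by
      intro j
      have := coord_le_evNorm uv j
      rwa [show evNorm uv = ‖u‖ by rw [huv]; unfold evNorm; rw [Equiv.symm_apply_apply]] at this
    have hdecomp : A.mulVec uv = ∑ j : Fin d, uv j • A.mulVec (Pi.single j 1) := by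
      have hsingle : ∀ j : Fin d, uv j • (Pi.single j (1:ℂ) : Fin d → ℂ) = Pi.single j (uv j) := by
        intro j
        ext k
        simp [Pi.single_apply, smul_eq_mul, mul_ite]
      have h0 : uv = ∑ j : Fin d, uv j • (Pi.single j (1:ℂ) : Fin d → ℂ) := by
        simp_rw [hsingle]
        exact (Finset.univ_sum_single uv).symm
      calc A.mulVec uv = A.mulVecLin (∑ j : Fin d, uv j • (Pi.single j (1:ℂ) : Fin d → ℂ)) := by
            rw [← h0]; rfl
        _ = ∑ j : Fin d, uv j • A.mulVecLin (Pi.single j (1:ℂ)) := by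
            rw [map_sum]
            exact Finset.sum_congr rfl fun j _ => A.mulVecLin.map_smul (uv j) _
        _ = ∑ j : Fin d, uv j • A.mulVec (Pi.single j 1) := rfl
    rw [norm_clm_apply_eq_evNorm, ← huv, hdecomp]
    calc evNorm (∑ j : Fin d, uv j • A.mulVec (Pi.single j 1))
        ≤ ∑ j : Fin d, evNorm (uv j • A.mulVec (Pi.single j 1)) := evNorm_sum_le _ _
      _ ≤ ∑ j : Fin d, ‖u‖ * max (Bf j) 0 := by
          apply Finset.sum_le_sum
          intro j _
          rw [evNorm_smul]
          exact mul_le_mul (huvnorm j) ((hBf j n x).trans (le_max_left _ _))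
            (evNorm_nonneg _) (norm_nonneg u)
      _ = D * ‖u‖ := by
          rw [hD, Finset.sum_mul]
          exact Finset.sum_congr rfl fun j _ => mul_comm _ _
  -- V is nonzero
  have hVne_bot : V ≠ ⊥ := by
    intro hbot
    -- every unit vector escapes to norm > 3
    have hesc : ∀ u : Metric.sphere (0 : EuclideanSpace ℂ (Fin d)) 1,
        ∃ (n : ℕ) (x : ℕ → I),
          3 < ‖Matrix.toEuclideanCLM (𝕜 := ℂ) (prodS S x n) (u : EuclideanSpace ℂ (Fin d))‖ := by
      rintro ⟨u, hu⟩
      have hunorm : ‖u‖ = 1 := mem_sphere_zero_iff_norm.mp hu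
      have hne : (WithLp.equiv 2 (Fin d → ℂ) u) ∉ V := by
        intro hmemv
        rw [hbot, Submodule.mem_bot] at hmemv
        have : u = 0 := by
          apply (WithLp.equiv 2 (Fin d → ℂ)).injective
          simpa using hmemv
        rw [this, norm_zero] at hunorm
        norm_num at hunorm
      rw [hmemV] at hne
      push_neg at hne
      obtain ⟨n, x, hnx⟩ := hne 3
      refine ⟨n, x, ?_⟩
      rw [norm_clm_apply_eq_evNorm]
      exact hnx
    choose nF xF hF using hesc
    -- each escape word is nonempty
    have hnF1 : ∀ u, 1 ≤ nF u := by
      intro u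
      by_contra hcon
      have h0 : nF u = 0 := by omega
      have := hF u
      rw [h0] at this
      have h1 : prodS S (xF u) 0 = 1 := rfl
      rw [h1, map_one, ContinuousLinearMap.one_apply,
        mem_sphere_zero_iff_norm.mp u.2] at this
      norm_num at this
    -- finite subcover of the sphere
    set U : Metric.sphere (0 : EuclideanSpace ℂ (Fin d)) 1 → Set (EuclideanSpace ℂ (Fin d)) :=
      fun u => {w | 2 < ‖Matrix.toEuclideanCLM (𝕜 := ℂ) (prodS S (xF u) (nF u)) w‖} with hU
    have hUopen : ∀ u, IsOpen (U u) := by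
      intro u
      exact isOpen_lt continuous_const
        ((Matrix.toEuclideanCLM (𝕜 := ℂ) (prodS S (xF u) (nF u))).continuous.norm)
    have hcover : Metric.sphere (0 : EuclideanSpace ℂ (Fin d)) 1 ⊆ ⋃ u, U u := by
      intro w hw
      exact Set.mem_iUnion.mpr ⟨⟨w, hw⟩, by
        simp only [hU, Set.mem_setOf_eq]
        have := hF ⟨w, hw⟩
        linarith⟩
    obtain ⟨t, ht⟩ := (isCompact_sphere (0 : EuclideanSpace ℂ (Fin d)) 1).elim_finite_subcover
      U hUopen hcover
    set L : ℕ := t.sup nF with hL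
    -- expansion step for arbitrary nonzero vectors
    have hstep : ∀ w : EuclideanSpace ℂ (Fin d), w ≠ 0 → ∃ u ∈ t,
        2 * ‖w‖ < ‖Matrix.toEuclideanCLM (𝕜 := ℂ) (prodS S (xF u) (nF u)) w‖ := by
      intro w hw
      have hwpos : 0 < ‖w‖ := norm_pos_iff.mpr hw
      have hnc : ‖((‖w‖ : ℂ))⁻¹‖ = ‖w‖⁻¹ := by
        rw [norm_inv, Complex.norm_real, norm_norm]
      have hw' : (((‖w‖ : ℂ))⁻¹ • w) ∈ Metric.sphere (0 : EuclideanSpace ℂ (Fin d)) 1 := by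
        rw [mem_sphere_zero_iff_norm, norm_smul, hnc, inv_mul_cancel₀ hwpos.ne']
      obtain ⟨u, hut, hu2⟩ := Set.mem_iUnion₂.mp (ht hw')
      refine ⟨u, hut, ?_⟩
      have hu2' : 2 < ‖Matrix.toEuclideanCLM (𝕜 := ℂ)
          (prodS S (xF u) (nF u)) (((‖w‖ : ℂ))⁻¹ • w)‖ := hu2
      rw [_root_.map_smul, norm_smul, hnc] at hu2'
      calc 2 * ‖w‖ < (‖w‖⁻¹ * ‖Matrix.toEuclideanCLM (𝕜 := ℂ)
            (prodS S (xF u) (nF u)) w‖) * ‖w‖ := by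
            apply mul_lt_mul_of_pos_right hu2' hwpos
        _ = ‖Matrix.toEuclideanCLM (𝕜 := ℂ) (prodS S (xF u) (nF u)) w‖ := by
            field_simp
    -- base point
    set v0 : EuclideanSpace ℂ (Fin d) := EuclideanSpace.single (⟨0, hd⟩ : Fin d) (1 : ℂ)
      with hv0def
    have hv0 : ‖v0‖ = 1 := by
      rw [hv0def, EuclideanSpace.norm_single, norm_one]
    have hL1 : 1 ≤ L := by
      have hv0s : v0 ∈ Metric.sphere (0 : EuclideanSpace ℂ (Fin d)) 1 :=
        mem_sphere_zero_iff_norm.mpr hv0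
      obtain ⟨u, hut, _⟩ := Set.mem_iUnion₂.mp (ht hv0s)
      exact le_trans (hnF1 u) (Finset.le_sup hut)
    -- iterated expansion
    have hiter : ∀ m : ℕ, ∃ (x : ℕ → I) (N : ℕ), m ≤ N ∧ N ≤ m * L ∧
        (2 : ℝ) ^ m ≤ ‖Matrix.toEuclideanCLM (𝕜 := ℂ) (prodS S x N) v0‖ := by
      intro m
      induction m with
      | zero =>
        refine ⟨fun _ => Classical.arbitrary I, 0, le_refl 0, by simp, ?_⟩
        have h1 : prodS S (fun _ => Classical.arbitrary I) 0 = 1 := rfl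
        rw [h1, map_one, ContinuousLinearMap.one_apply, hv0, pow_zero]
      | succ m ih =>
        obtain ⟨x, N, hmN, hNL, hnorm⟩ := ih
        set w : EuclideanSpace ℂ (Fin d) :=
          Matrix.toEuclideanCLM (𝕜 := ℂ) (prodS S x N) v0 with hwdef
        have hw0 : w ≠ 0 := by
          intro h
          rw [h, norm_zero] at hnorm
          have : (0:ℝ) < 2 ^ m := by positivity
          linarith
        obtain ⟨u, hut, hu2⟩ := hstep w hw0
        set x' : ℕ → I := fun k => if k < N then x k else xF u (k - N) with hx'
        refine ⟨x', N + nF u, by have := hnF1 u; omega, ?_, ?_⟩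
        · have h1 : nF u ≤ L := Finset.le_sup hut
          have h2 : (m + 1) * L = m * L + L := by ring
          omega
        · have hsplit : prodS S x' (N + nF u) = prodS S (xF u) (nF u) * prodS S x N := by
            rw [prodS_add S x' N (nF u)]
            congr 1
            · apply prodS_congr
              intro k _
              have hk : ¬ (k + N < N) := by omega
              simp [hx', hk]
            · apply prodS_congr
              intro k hk
              simp [hx', hk]
          rw [hsplit, map_mul, ContinuousLinearMap.mul_apply, ← hwdef]
          have : (2:ℝ) ^ (m + 1) = 2 * (2:ℝ) ^ m := by ring
          rw [this]
          calc 2 * (2:ℝ) ^ m ≤ 2 * ‖w‖ := by linarith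
            _ ≤ ‖Matrix.toEuclideanCLM (𝕜 := ℂ) (prodS S (xF u) (nF u)) w‖ := le_of_lt hu2
    -- contradiction with the joint spectral radius
    have hLpos : (0:ℝ) < (L:ℝ) := by exact_mod_cast hL1
    have hfreq : ∃ᶠ n in atTop,
        (2:ℝ) ^ ((1:ℝ) / (L:ℝ)) ≤ ⨆ x : ℕ → I, opNorm (prodS S x n) ^ (1 / (n : ℝ)) := by
      rw [Filter.frequently_atTop]
      intro a
      obtain ⟨x, N, h1, h2, h3⟩ := hiter (max a 1)
      have hm1 : 1 ≤ max a 1 := le_max_right a 1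
      have hNpos : 0 < N := lt_of_lt_of_le hm1 h1
      refine ⟨N, le_trans (le_max_left a 1) h1, ?_⟩
      have hop : (2:ℝ) ^ (max a 1) ≤ opNorm (prodS S x N) := by
        have := (Matrix.toEuclideanCLM (𝕜 := ℂ) (prodS S x N)).le_opNorm v0
        rw [hv0, mul_one] at this
        exact le_trans h3 this
      have hr1 : (2:ℝ) ^ ((1:ℝ)/(L:ℝ)) ≤ ((2:ℝ) ^ (max a 1)) ^ ((1:ℝ)/(N:ℝ)) := by
        rw [← Real.rpow_natCast (2:ℝ) (max a 1), ← Real.rpow_mul (by norm_num : (0:ℝ) ≤ 2),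
          mul_one_div]
        apply Real.rpow_le_rpow_of_exponent_le (by norm_num : (1:ℝ) ≤ 2)
        rw [div_le_div_iff₀ hLpos (by exact_mod_cast hNpos : (0:ℝ) < (N:ℝ))]
        have : (N:ℝ) ≤ (max a 1 : ℕ) * (L:ℝ) := by exact_mod_cast h2
        linarith
      have hr2 : ((2:ℝ) ^ (max a 1)) ^ ((1:ℝ)/(N:ℝ)) ≤ opNorm (prodS S x N) ^ ((1:ℝ)/(N:ℝ)) :=
        Real.rpow_le_rpow (by positivity) hop (by positivity)
      refine le_trans hr1 (le_trans hr2 ?_)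
      exact le_ciSup (hbddrange N) x
    have hbound : Filter.IsBoundedUnder (· ≤ ·) Filter.atTop
        (fun n : ℕ => ⨆ x : ℕ → I, opNorm (prodS S x n) ^ (1 / (n : ℝ))) := by
      refine Filter.isBoundedUnder_of ⟨C, fun n => ?_⟩
      exact ciSup_le fun x => helem n x
    have hle := Filter.le_limsup_of_frequently_le hfreq hbound
    rw [hjsr] at hle
    have hgt : 1 < (2:ℝ) ^ ((1:ℝ) / (L:ℝ)) := by
      rw [show (1:ℝ) = (2:ℝ) ^ (0:ℝ) by rw [Real.rpow_zero]]
      apply Real.rpow_lt_rpow_of_exponent_lt (by norm_num : (1:ℝ) < 2)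
      positivity
    linarith
  -- conclude via block triangularization
  have hr_pos : 0 < Module.finrank ℂ V := by
    rw [Module.finrank_pos_iff]
    exact (Submodule.nontrivial_iff_ne_bot).mpr hVne_bot
  have hr_lt : Module.finrank ℂ V < d := by
    have := Submodule.finrank_lt (K := ℂ) (V := Fin d → ℂ) hVne_top
    rwa [Module.finrank_pi, Fintype.card_fin] at this
  obtain ⟨P, hP, hblock⟩ := invariant_block_triangular S V hVinv
  refine ⟨P, hP, d - Module.finrank ℂ V, by omega, by omega, ?_⟩
  intro i j k hj hk
  have heq : d - (d - Module.finrank ℂ V) = Module.finrank ℂ V := by omega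
  rw [heq] at hj hk
  exact hblock i j k hj hk
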